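/- Let L > 0, μ > 0, D > 0 and R₁, S₁ > 0, and let σ ∈ C²(ℝ) be strictly decreasing. Suppose f, g, Γ ∈ C²([0,L]) are strictly positive functions which form a steady state of the gravity-driven system (G), i.e. the x-derivatives of the three fluxes ∂ₓ[f((R₁f²/3)∂ₓf + S₁μ(f²/3 + fg/2)∂ₓ(f+g) − μ(f/2)∂ₓ(σ∘Γ))], ∂ₓ[g((R₁f²/2)∂ₓf + S₁(g²/3 + μ(f²/2 + fg))∂ₓ(f+g) − (μf + g/2)∂ₓ(σ∘Γ))] and ∂ₓ[Γ((R₁f²/2)∂ₓf + S₁(g²/2 + μ(f²/2 + fg))∂ₓ(f+g) − (μf + g)∂ₓ(σ∘Γ)) + D∂ₓΓ] all vanish identically on (0,L), and ∂ₓf = ∂ₓg = ∂ₓΓ = 0 at x = 0 and x = L. Then f, g and Γ are constant on [0,L]. -/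

import Mathlib

open Set Filter Topology

private lemma strictAnti_deriv_nonpos {σ : ℝ → ℝ} (h : StrictAnti σ) {y : ℝ}
    (hd : DifferentiableAt ℝ σ y) : deriv σ y ≤ 0 := by
  have hda := hd.hasDerivAt
  rw [hasDerivAt_iff_tendsto_slope] at hda
  have hsub : Ioi y ⊆ {y}ᶜ := fun z hz => ne_of_gt hz
  have hda' : Tendsto (slope σ y) (𝓝[>] y) (𝓝 (deriv σ y)) :=
    hda.mono_left (nhdsWithin_mono y hsub)
  refine le_of_tendsto hda' ?_
  filter_upwards [self_mem_nhdsWithin] with z hz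
  have h1 : σ z ≤ σ y := (h hz).le
  have h2 : (0:ℝ) < z - y := sub_pos.mpr hz
  rw [slope_def_field]
  exact div_nonpos_of_nonpos_of_nonneg (by linarith) h2.le

private lemma flux_zero_on_Ioo {a b : ℝ} {Φ : ℝ → ℝ} (hab : a < b)
    (hcont : ContinuousOn Φ (Icc a b))
    (hdiff : ∀ x ∈ Ioo a b, DifferentiableAt ℝ Φ x)
    (hderiv : ∀ x ∈ Ioo a b, deriv Φ x = 0)
    (h0 : Φ a = 0) : ∀ x ∈ Ioo a b, Φ x = 0 := by
  intro x hx
  have key : ∀ ε ∈ Ioc a x, Φ x = Φ ε := by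
    intro ε hε
    have h1 : ∀ y ∈ Icc ε x, Φ y = Φ ε := by
      refine constant_of_has_deriv_right_zero
        (hcont.mono (Icc_subset_Icc hε.1.le hx.2.le)) ?_
      intro y hy
      have hy' : y ∈ Ioo a b := ⟨lt_of_lt_of_le hε.1 hy.1, hy.2.trans hx.2⟩
      have hh := (hdiff y hy').hasDerivAt
      rw [hderiv y hy'] at hh
      exact hh.hasDerivWithinAt
    exact h1 x (right_mem_Icc.mpr hε.2)
  have hne : (𝓝[Ioc a x] a).NeBot := by
    apply mem_closure_iff_nhdsWithin_neBot.mp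
    rw [closure_Ioc (ne_of_lt hx.1)]
    exact left_mem_Icc.mpr hx.1.le
  have t1 : Tendsto Φ (𝓝[Ioc a x] a) (𝓝 (Φ a)) :=
    (hcont.continuousWithinAt (left_mem_Icc.mpr hab.le)).mono_left
      (nhdsWithin_mono a (fun z hz => ⟨hz.1.le, hz.2.trans hx.2.le⟩))
  have t2 : Tendsto Φ (𝓝[Ioc a x] a) (𝓝 (Φ x)) := by
    refine Tendsto.congr' ?_ tendsto_const_nhds
    filter_upwards [self_mem_nhdsWithin] with ε hε
    exact key ε hε
  exact (tendsto_nhds_unique t2 t1).trans h0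

/-- Corollary 3.2 of the paper: under assumption G1 (`R₁, S₁ > 0`) and for a strictly
decreasing surface tension `σ`, the only positive steady states of the gravity-driven
two-phase thin film system with insoluble surfactant (with Neumann boundary
conditions) are constants. -/
theorem gravity_steady_states_constant
    (L : ℝ) (hL : 0 < L)
    (μ D R₁ S₁ : ℝ) (hμ : 0 < μ) (hD : 0 < D) (hR₁ : 0 < R₁) (hS₁ : 0 < S₁)
    (σ : ℝ → ℝ) (hσ : ContDiff ℝ 2 σ) (hσdec : StrictAnti σ)
    (f g Γ : ℝ → ℝ)
    (hf : ContDiffOn ℝ 2 f (Icc 0 L))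
    (hg : ContDiffOn ℝ 2 g (Icc 0 L))
    (hΓ : ContDiffOn ℝ 2 Γ (Icc 0 L))
    (hfpos : ∀ x ∈ Icc (0 : ℝ) L, 0 < f x)
    (hgpos : ∀ x ∈ Icc (0 : ℝ) L, 0 < g x)
    (hΓpos : ∀ x ∈ Icc (0 : ℝ) L, 0 < Γ x)
    -- the x-derivatives of the three fluxes vanish identically on (0,L)
    (hflux_f : ∀ x ∈ Ioo (0 : ℝ) L,
      deriv (fun y => f y *
        (R₁ * (f y) ^ 2 / 3 * deriv f y
         + S₁ * μ * ((f y) ^ 2 / 3 + f y * g y / 2) * deriv (fun ξ => f ξ + g ξ) y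
         - μ * (f y / 2) * deriv (fun ξ => σ (Γ ξ)) y)) x = 0)
    (hflux_g : ∀ x ∈ Ioo (0 : ℝ) L,
      deriv (fun y => g y *
        (R₁ * (f y) ^ 2 / 2 * deriv f y
         + S₁ * ((g y) ^ 2 / 3 + μ * ((f y) ^ 2 / 2 + f y * g y))
            * deriv (fun ξ => f ξ + g ξ) y
         - (μ * f y + g y / 2) * deriv (fun ξ => σ (Γ ξ)) y)) x = 0)
    (hflux_Γ : ∀ x ∈ Ioo (0 : ℝ) L,
      deriv (fun y => Γ y *
        (R₁ * (f y) ^ 2 / 2 * deriv f y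
         + S₁ * ((g y) ^ 2 / 2 + μ * ((f y) ^ 2 / 2 + f y * g y))
            * deriv (fun ξ => f ξ + g ξ) y
         - (μ * f y + g y) * deriv (fun ξ => σ (Γ ξ)) y)
        + D * deriv Γ y) x = 0)
    -- Neumann boundary conditions at x = 0 and x = L
    (hbc : derivWithin f (Icc 0 L) 0 = 0 ∧ derivWithin f (Icc 0 L) L = 0 ∧
      derivWithin g (Icc 0 L) 0 = 0 ∧ derivWithin g (Icc 0 L) L = 0 ∧
      derivWithin Γ (Icc 0 L) 0 = 0 ∧ derivWithin Γ (Icc 0 L) L = 0) :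
    ∀ x ∈ Icc (0 : ℝ) L, f x = f 0 ∧ g x = g 0 ∧ Γ x = Γ 0 := by
  obtain ⟨hbf0, hbfL, hbg0, hbgL, hbΓ0, hbΓL⟩ := hbc
  have hsU : UniqueDiffOn ℝ (Icc (0:ℝ) L) := uniqueDiffOn_Icc hL
  have h0L : (0:ℝ) ∈ Icc (0:ℝ) L := left_mem_Icc.mpr hL.le
  -- smoothness of σ and its derivative
  have hσ2 : ContDiff ℝ (1 + 1 : WithTop ℕ∞) σ := by
    rw [show (1 + 1 : WithTop ℕ∞) = 2 from by norm_num]; exact hσ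
  have hσ1 : ContDiff ℝ 1 (deriv σ) := (contDiff_succ_iff_deriv.mp hσ2).2.2
  have hσdiff : Differentiable ℝ σ := hσ.differentiable (by norm_num)
  have hσ'cont : Continuous (deriv σ) := hσ1.continuous
  have hσ'diff : Differentiable ℝ (deriv σ) := hσ1.differentiable (by norm_num)
  -- continuity of the basic functions on Icc
  have hfc : ContinuousOn f (Icc 0 L) := hf.continuousOn
  have hgc : ContinuousOn g (Icc 0 L) := hg.continuousOn
  have hΓc : ContinuousOn Γ (Icc 0 L) := hΓ.continuousOn
  have hf1 : ContDiffOn ℝ 1 (derivWithin f (Icc 0 L)) (Icc 0 L) :=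
    hf.derivWithin hsU (by norm_num)
  have hg1 : ContDiffOn ℝ 1 (derivWithin g (Icc 0 L)) (Icc 0 L) :=
    hg.derivWithin hsU (by norm_num)
  have hΓ1 : ContDiffOn ℝ 1 (derivWithin Γ (Icc 0 L)) (Icc 0 L) :=
    hΓ.derivWithin hsU (by norm_num)
  have hf'c : ContinuousOn (derivWithin f (Icc 0 L)) (Icc 0 L) := hf1.continuousOn
  have hg'c : ContinuousOn (derivWithin g (Icc 0 L)) (Icc 0 L) := hg1.continuousOn
  have hΓ'c : ContinuousOn (derivWithin Γ (Icc 0 L)) (Icc 0 L) := hΓ1.continuousOn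
  have hσΓc : ContinuousOn (fun y => deriv σ (Γ y)) (Icc 0 L) :=
    hσ'cont.comp_continuousOn hΓc
  -- pointwise facts in the interior
  have hyIcc : ∀ y ∈ Ioo (0:ℝ) L, y ∈ Icc (0:ℝ) L := fun y hy => ⟨hy.1.le, hy.2.le⟩
  have hmemI : ∀ y ∈ Ioo (0:ℝ) L, Icc (0:ℝ) L ∈ 𝓝 y := fun y hy => Icc_mem_nhds hy.1 hy.2
  have hfd : ∀ y ∈ Ioo (0:ℝ) L, DifferentiableAt ℝ f y := fun y hy =>
    ((hf.differentiableOn (by norm_num)) y (hyIcc y hy)).differentiableAt (hmemI y hy)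
  have hgd : ∀ y ∈ Ioo (0:ℝ) L, DifferentiableAt ℝ g y := fun y hy =>
    ((hg.differentiableOn (by norm_num)) y (hyIcc y hy)).differentiableAt (hmemI y hy)
  have hΓd : ∀ y ∈ Ioo (0:ℝ) L, DifferentiableAt ℝ Γ y := fun y hy =>
    ((hΓ.differentiableOn (by norm_num)) y (hyIcc y hy)).differentiableAt (hmemI y hy)
  have hf'd : ∀ y ∈ Ioo (0:ℝ) L, DifferentiableAt ℝ (derivWithin f (Icc 0 L)) y := fun y hy =>
    ((hf1.differentiableOn (by norm_num)) y (hyIcc y hy)).differentiableAt (hmemI y hy)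
  have hg'd : ∀ y ∈ Ioo (0:ℝ) L, DifferentiableAt ℝ (derivWithin g (Icc 0 L)) y := fun y hy =>
    ((hg1.differentiableOn (by norm_num)) y (hyIcc y hy)).differentiableAt (hmemI y hy)
  have hΓ'd : ∀ y ∈ Ioo (0:ℝ) L, DifferentiableAt ℝ (derivWithin Γ (Icc 0 L)) y := fun y hy =>
    ((hΓ1.differentiableOn (by norm_num)) y (hyIcc y hy)).differentiableAt (hmemI y hy)
  have hσΓd : ∀ y ∈ Ioo (0:ℝ) L, DifferentiableAt ℝ (fun y => deriv σ (Γ y)) y := fun y hy =>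
    (hσ'diff (Γ y)).comp y (hΓd y hy)
  have hdfW : ∀ y ∈ Ioo (0:ℝ) L, derivWithin f (Icc 0 L) y = deriv f y := fun y hy =>
    derivWithin_of_mem_nhds (hmemI y hy)
  have hdgW : ∀ y ∈ Ioo (0:ℝ) L, derivWithin g (Icc 0 L) y = deriv g y := fun y hy =>
    derivWithin_of_mem_nhds (hmemI y hy)
  have hdΓW : ∀ y ∈ Ioo (0:ℝ) L, derivWithin Γ (Icc 0 L) y = deriv Γ y := fun y hy =>
    derivWithin_of_mem_nhds (hmemI y hy)
  have hsum : ∀ y ∈ Ioo (0:ℝ) L, deriv (fun ξ => f ξ + g ξ) y = deriv f y + deriv g y :=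
    fun y hy => deriv_add (hfd y hy) (hgd y hy)
  have hcomp : ∀ y ∈ Ioo (0:ℝ) L, deriv (fun ξ => σ (Γ ξ)) y = deriv σ (Γ y) * deriv Γ y := by
    intro y hy
    exact deriv_comp y (hσdiff (Γ y)) (hΓd y hy)
  -- the three fluxes, rewritten with derivWithin, vanish on the interior
  have hFf : ∀ x ∈ Ioo (0:ℝ) L,
      f x * (R₁ * f x ^ 2 / 3 * derivWithin f (Icc 0 L) x
        + S₁ * μ * (f x ^ 2 / 3 + f x * g x / 2)
            * (derivWithin f (Icc 0 L) x + derivWithin g (Icc 0 L) x)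
        - μ * (f x / 2) * (deriv σ (Γ x) * derivWithin Γ (Icc 0 L) x)) = 0 := by
    refine flux_zero_on_Ioo hL ?_ ?_ ?_ ?_
    · fun_prop
    · intro y hy
      have h1 := hfd y hy; have h2 := hgd y hy; have h3 := hΓd y hy
      have h4 := hf'd y hy; have h5 := hg'd y hy; have h6 := hΓ'd y hy
      have h7 := hσΓd y hy
      fun_prop
    · intro y hy
      have he : (fun x => f x * (R₁ * f x ^ 2 / 3 * derivWithin f (Icc 0 L) x
          + S₁ * μ * (f x ^ 2 / 3 + f x * g x / 2)
              * (derivWithin f (Icc 0 L) x + derivWithin g (Icc 0 L) x)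
          - μ * (f x / 2) * (deriv σ (Γ x) * derivWithin Γ (Icc 0 L) x)))
          =ᶠ[𝓝 y] (fun x => f x *
            (R₁ * (f x) ^ 2 / 3 * deriv f x
             + S₁ * μ * ((f x) ^ 2 / 3 + f x * g x / 2) * deriv (fun ξ => f ξ + g ξ) x
             - μ * (f x / 2) * deriv (fun ξ => σ (Γ ξ)) x)) := by
        filter_upwards [isOpen_Ioo.mem_nhds hy] with z hz
        rw [hsum z hz, hcomp z hz, hdfW z hz, hdgW z hz, hdΓW z hz]
      rw [he.deriv_eq]
      exact hflux_f y hy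
    · rw [hbf0, hbg0, hbΓ0]; ring
  have hFg : ∀ x ∈ Ioo (0:ℝ) L,
      g x * (R₁ * f x ^ 2 / 2 * derivWithin f (Icc 0 L) x
        + S₁ * (g x ^ 2 / 3 + μ * (f x ^ 2 / 2 + f x * g x))
            * (derivWithin f (Icc 0 L) x + derivWithin g (Icc 0 L) x)
        - (μ * f x + g x / 2) * (deriv σ (Γ x) * derivWithin Γ (Icc 0 L) x)) = 0 := by
    refine flux_zero_on_Ioo hL ?_ ?_ ?_ ?_
    · fun_prop
    · intro y hy
      have h1 := hfd y hy; have h2 := hgd y hy; have h3 := hΓd y hy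
      have h4 := hf'd y hy; have h5 := hg'd y hy; have h6 := hΓ'd y hy
      have h7 := hσΓd y hy
      fun_prop
    · intro y hy
      have he : (fun x => g x * (R₁ * f x ^ 2 / 2 * derivWithin f (Icc 0 L) x
          + S₁ * (g x ^ 2 / 3 + μ * (f x ^ 2 / 2 + f x * g x))
              * (derivWithin f (Icc 0 L) x + derivWithin g (Icc 0 L) x)
          - (μ * f x + g x / 2) * (deriv σ (Γ x) * derivWithin Γ (Icc 0 L) x)))
          =ᶠ[𝓝 y] (fun x => g x *
            (R₁ * (f x) ^ 2 / 2 * deriv f x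
             + S₁ * ((g x) ^ 2 / 3 + μ * ((f x) ^ 2 / 2 + f x * g x))
                * deriv (fun ξ => f ξ + g ξ) x
             - (μ * f x + g x / 2) * deriv (fun ξ => σ (Γ ξ)) x)) := by
        filter_upwards [isOpen_Ioo.mem_nhds hy] with z hz
        rw [hsum z hz, hcomp z hz, hdfW z hz, hdgW z hz, hdΓW z hz]
      rw [he.deriv_eq]
      exact hflux_g y hy
    · rw [hbf0, hbg0, hbΓ0]; ring
  have hFΓ : ∀ x ∈ Ioo (0:ℝ) L,
      Γ x * (R₁ * f x ^ 2 / 2 * derivWithin f (Icc 0 L) x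
        + S₁ * (g x ^ 2 / 2 + μ * (f x ^ 2 / 2 + f x * g x))
            * (derivWithin f (Icc 0 L) x + derivWithin g (Icc 0 L) x)
        - (μ * f x + g x) * (deriv σ (Γ x) * derivWithin Γ (Icc 0 L) x))
        + D * derivWithin Γ (Icc 0 L) x = 0 := by
    refine flux_zero_on_Ioo hL ?_ ?_ ?_ ?_
    · fun_prop
    · intro y hy
      have h1 := hfd y hy; have h2 := hgd y hy; have h3 := hΓd y hy
      have h4 := hf'd y hy; have h5 := hg'd y hy; have h6 := hΓ'd y hy
      have h7 := hσΓd y hy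
      fun_prop
    · intro y hy
      have he : (fun x => Γ x * (R₁ * f x ^ 2 / 2 * derivWithin f (Icc 0 L) x
          + S₁ * (g x ^ 2 / 2 + μ * (f x ^ 2 / 2 + f x * g x))
              * (derivWithin f (Icc 0 L) x + derivWithin g (Icc 0 L) x)
          - (μ * f x + g x) * (deriv σ (Γ x) * derivWithin Γ (Icc 0 L) x))
          + D * derivWithin Γ (Icc 0 L) x)
          =ᶠ[𝓝 y] (fun x => Γ x *
            (R₁ * (f x) ^ 2 / 2 * deriv f x
             + S₁ * ((g x) ^ 2 / 2 + μ * ((f x) ^ 2 / 2 + f x * g x))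
                * deriv (fun ξ => f ξ + g ξ) x
             - (μ * f x + g x) * deriv (fun ξ => σ (Γ ξ)) x)
            + D * deriv Γ x) := by
        filter_upwards [isOpen_Ioo.mem_nhds hy] with z hz
        rw [hsum z hz, hcomp z hz, hdfW z hz, hdgW z hz, hdΓW z hz]
      rw [he.deriv_eq]
      exact hflux_Γ y hy
    · rw [hbf0, hbg0, hbΓ0]; ring
  -- pointwise algebra: the derivatives vanish on the interior
  have hzero : ∀ x ∈ Ioo (0:ℝ) L, derivWithin f (Icc 0 L) x = 0 ∧
      derivWithin g (Icc 0 L) x = 0 ∧ derivWithin Γ (Icc 0 L) x = 0 := by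
    intro x hx
    have hxI := hyIcc x hx
    set F := f x with hF
    set G := g x with hG
    set Θ := Γ x with hΘ
    set A := derivWithin f (Icc 0 L) x with hA
    set B := derivWithin g (Icc 0 L) x with hB
    set C := derivWithin Γ (Icc 0 L) x with hC
    set σ' := deriv σ (Γ x) with hσ'
    have hFpos : 0 < F := hfpos x hxI
    have hGpos : 0 < G := hgpos x hxI
    have hΘpos : 0 < Θ := hΓpos x hxI
    have hσ'np : σ' ≤ 0 := strictAnti_deriv_nonpos hσdec (hσdiff (Γ x))
    have E1 : R₁ * F ^ 2 / 3 * A + S₁ * μ * (F ^ 2 / 3 + F * G / 2) * (A + B)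
        - μ * (F / 2) * (σ' * C) = 0 := by
      have := hFf x hx
      rcases mul_eq_zero.mp this with h | h
      · exact absurd h hFpos.ne'
      · exact h
    have E2 : R₁ * F ^ 2 / 2 * A + S₁ * (G ^ 2 / 3 + μ * (F ^ 2 / 2 + F * G)) * (A + B)
        - (μ * F + G / 2) * (σ' * C) = 0 := by
      have := hFg x hx
      rcases mul_eq_zero.mp this with h | h
      · exact absurd h hGpos.ne'
      · exact h
    have E3 : Θ * (R₁ * F ^ 2 / 2 * A + S₁ * (G ^ 2 / 2 + μ * (F ^ 2 / 2 + F * G)) * (A + B)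
        - (μ * F + G) * (σ' * C)) + D * C = 0 := hFΓ x hx
    -- eliminate A between E1 and E2
    have hq : R₁ * S₁ * F ^ 2 * (G ^ 2 / 9 + μ * F * G / 12) * (A + B)
        = R₁ * F ^ 2 * (μ * F / 12 + G / 6) * (σ' * C) := by
      linear_combination (R₁ * F ^ 2 / 3) * E2 - (R₁ * F ^ 2 / 2) * E1
    have h3' : Θ * (S₁ * G ^ 2 / 6 * (A + B) - G / 2 * (σ' * C)) + D * C = 0 := by
      linear_combination E3 - Θ * E2
    have hfin : C * (D * (R₁ * S₁ * F ^ 2 * (G ^ 2 / 9 + μ * F * G / 12))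
        - σ' * Θ * (R₁ * S₁ * F ^ 2 * G ^ 2 * (μ * F + G) / 36)) = 0 := by
      linear_combination (R₁ * S₁ * F ^ 2 * (G ^ 2 / 9 + μ * F * G / 12)) * h3'
        - (Θ * S₁ * G ^ 2 / 6) * hq
    have hKpos : 0 < R₁ * S₁ * F ^ 2 * (G ^ 2 / 9 + μ * F * G / 12) := by positivity
    have hNpos : 0 < R₁ * S₁ * F ^ 2 * G ^ 2 * (μ * F + G) / 36 := by positivity
    have hfac : 0 < D * (R₁ * S₁ * F ^ 2 * (G ^ 2 / 9 + μ * F * G / 12))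
        - σ' * Θ * (R₁ * S₁ * F ^ 2 * G ^ 2 * (μ * F + G) / 36) := by
      have h1 : 0 < D * (R₁ * S₁ * F ^ 2 * (G ^ 2 / 9 + μ * F * G / 12)) := by positivity
      have h2 : σ' * Θ * (R₁ * S₁ * F ^ 2 * G ^ 2 * (μ * F + G) / 36) ≤ 0 := by
        apply mul_nonpos_of_nonpos_of_nonneg
        · exact mul_nonpos_of_nonpos_of_nonneg hσ'np hΘpos.le
        · positivity
      linarith
    have hC0 : C = 0 := by
      rcases mul_eq_zero.mp hfin with h | h
      · exact h
      · exact absurd h hfac.ne'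
    have hAB : A + B = 0 := by
      have := hq
      rw [hC0] at this
      have h0 : R₁ * S₁ * F ^ 2 * (G ^ 2 / 9 + μ * F * G / 12) * (A + B) = 0 := by
        linarith [this]
      rcases mul_eq_zero.mp h0 with h | h
      · exact absurd h hKpos.ne'
      · exact h
    have hA0 : A = 0 := by
      have hA' : R₁ * F ^ 2 / 3 * A = 0 := by
        rw [hC0] at E1
        linear_combination E1 - S₁ * μ * (F ^ 2 / 3 + F * G / 2) * hAB
      have hA'' : 0 < R₁ * F ^ 2 / 3 := by positivity
      rcases mul_eq_zero.mp hA' with h | h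
      · exact absurd h hA''.ne'
      · exact h
    refine ⟨hA0, by linarith, hC0⟩
  -- conclude constancy via vanishing derivWithin on [0, L)
  have hfA : ∀ y ∈ Ico (0:ℝ) L, derivWithin f (Icc 0 L) y = 0 := by
    intro y hy
    rcases eq_or_lt_of_le hy.1 with h | h
    · rw [← h]; exact hbf0
    · exact (hzero y ⟨h, hy.2⟩).1
  have hgA : ∀ y ∈ Ico (0:ℝ) L, derivWithin g (Icc 0 L) y = 0 := by
    intro y hy
    rcases eq_or_lt_of_le hy.1 with h | h
    · rw [← h]; exact hbg0
    · exact (hzero y ⟨h, hy.2⟩).2.1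
  have hΓA : ∀ y ∈ Ico (0:ℝ) L, derivWithin Γ (Icc 0 L) y = 0 := by
    intro y hy
    rcases eq_or_lt_of_le hy.1 with h | h
    · rw [← h]; exact hbΓ0
    · exact (hzero y ⟨h, hy.2⟩).2.2
  intro x hx
  exact ⟨constant_of_derivWithin_zero (hf.differentiableOn (by norm_num)) hfA x hx,
    constant_of_derivWithin_zero (hg.differentiableOn (by norm_num)) hgA x hx,
    constant_of_derivWithin_zero (hΓ.differentiableOn (by norm_num)) hΓA x hx⟩
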